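/- With the setup of a group Π, normal subgroup Π̃ with quotient Γ, section γ: Γ → Π with γ(1)=1, group G, homomorphism ψ: Γ → Aut(G), a homomorphism ρ̃: Π̃ → G, and a family (h_σ)_{σ∈Γ} in G satisfying ψ(σ)(ρ̃(γ(σ)⁻¹ α γ(σ))) = h_σ ρ̃(α) h_σ⁻¹ for all α ∈ Π̃: the formulas ρ(η·γ(σ)) := ρ̃(η)·h_σ⁻¹·s(σ) (for η ∈ Π̃, σ ∈ Γ) define a group homomorphism ρ: Π → G⋊Γ if and only if h_1 = 1 and for all σ₁, σ₂ ∈ Γ, ρ̃(γ(σ₁)γ(σ₂)γ(σ₁σ₂)⁻¹) = h_{σ₁}⁻¹ · ψ(σ₁)(h_{σ₂}⁻¹) · h_{σ₁σ₂}. -/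

import Mathlib

open SemidirectProduct

/-- given a `(Γ,ψ)`-invariant pair `(ρ̃, h)`, the formulas
`ρ (η * γ σ) = ρ̃ η * (h σ)⁻¹ * s σ` define a group homomorphism
`ρ : Π → G ⋊ Γ` iff `h 1 = 1` and the cocycle-type condition
`ρ̃ (γ σ₁ * γ σ₂ * γ (σ₁σ₂)⁻¹) = (h σ₁)⁻¹ * ψ σ₁ ((h σ₂)⁻¹) * h (σ₁σ₂)` holds. -/
theorem stmt1 {P G Γ : Type*} [Group P] [Group G] [Group Γ] [Finite Γ]
    (ψ : Γ →* MulAut G) (π : P →* Γ) (hπ : Function.Surjective π)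
    (γ : Γ → P) (hγ : ∀ σ, π (γ σ) = σ) (hγ1 : γ 1 = 1)
    (ρt : π.ker →* G) (h : Γ → G)
    (hinv : ∀ (σ : Γ) (α : π.ker),
      ψ σ (ρt ⟨(γ σ)⁻¹ * (α : P) * γ σ, by
          have hk : π (α : P) = 1 := MonoidHom.mem_ker.mp α.2
          rw [MonoidHom.mem_ker]
          simp [map_mul, map_inv, hγ, hk]⟩)
        = h σ * ρt α * (h σ)⁻¹) :
    (∃ ρ : P →* G ⋊[ψ] Γ, ∀ (η : P) (hη : η ∈ π.ker) (σ : Γ),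
        ρ (η * γ σ) = inl (ρt ⟨η, hη⟩) * (inl (h σ))⁻¹ * inr σ)
      ↔ (h 1 = 1 ∧ ∀ σ₁ σ₂ : Γ,
          ρt ⟨γ σ₁ * γ σ₂ * (γ (σ₁ * σ₂))⁻¹, by
              rw [MonoidHom.mem_ker]
              simp only [map_mul, map_inv, hγ]
              group⟩
            = (h σ₁)⁻¹ * ψ σ₁ ((h σ₂)⁻¹) * h (σ₁ * σ₂)) := by
  have hker : ∀ p : P, p * (γ (π p))⁻¹ ∈ π.ker := fun p => by
    rw [MonoidHom.mem_ker, map_mul, map_inv, hγ, mul_inv_cancel]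
  constructor
  · rintro ⟨ρ, hρ⟩
    have h1 : h 1 = 1 := by
      have e1 := hρ 1 (one_mem _) 1
      rw [hγ1, mul_one, map_one] at e1
      have : (⟨(1 : P), one_mem _⟩ : π.ker) = 1 := rfl
      rw [this, map_one, map_one, one_mul] at e1
      have := congrArg SemidirectProduct.left e1
      simpa using this.symm
    refine ⟨h1, fun σ₁ σ₂ => ?_⟩
    have hc : γ σ₁ * γ σ₂ * (γ (σ₁ * σ₂))⁻¹ ∈ π.ker := by
      rw [MonoidHom.mem_ker]; simp only [map_mul, map_inv, hγ]; group
    have e12 := hρ (γ σ₁ * γ σ₂ * (γ (σ₁ * σ₂))⁻¹) hc (σ₁ * σ₂)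
    rw [inv_mul_cancel_right] at e12
    have e1 := hρ 1 (one_mem _) σ₁
    have e2 := hρ 1 (one_mem _) σ₂
    rw [one_mul] at e1 e2
    have hone : (⟨(1 : P), one_mem _⟩ : π.ker) = 1 := rfl
    rw [hone, map_one, map_one, one_mul] at e1 e2
    have emul : ρ (γ σ₁ * γ σ₂) = ρ (γ σ₁) * ρ (γ σ₂) := map_mul ρ _ _
    rw [e12, e1, e2] at emul
    have hleft := congrArg SemidirectProduct.left emul
    simp only [mul_left, inv_left, left_inl, right_inl, mul_right, inv_right,
      right_inr, left_inr, map_one, map_inv, MulAut.one_apply] at hleft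
    -- hleft should be an equation in G
    have := hleft
    -- convert to goal
    have goal' : ρt ⟨γ σ₁ * γ σ₂ * (γ (σ₁ * σ₂))⁻¹, hc⟩
        = (h σ₁)⁻¹ * ψ σ₁ ((h σ₂)⁻¹) * h (σ₁ * σ₂) := by
      rw [eq_comm] at this
      rw [← mul_inv_eq_iff_eq_mul]
      simpa using this.symm
    exact goal'
  · rintro ⟨h1, hc⟩
    refine ⟨{ toFun := fun p => ⟨ρt ⟨p * (γ (π p))⁻¹, hker p⟩ * (h (π p))⁻¹, π p⟩,
              map_one' := ?_, map_mul' := ?_ }, ?_⟩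
    · have hπ1 : π (1 : P) = (1 : Γ) := map_one π
      show (⟨ρt ⟨(1:P) * (γ (π 1))⁻¹, hker 1⟩ * (h (π 1))⁻¹, π 1⟩ : G ⋊[ψ] Γ) = 1
      have e : (⟨(1:P) * (γ (π 1))⁻¹, hker 1⟩ : π.ker) = 1 :=
        Subtype.ext (by simp [hπ1, hγ1])
      rw [e, map_one, hπ1, h1]
      ext <;> simp
    · intro p q
      set σ₁ := π p
      set σ₂ := π q
      have hb' : γ σ₁ * (q * (γ σ₂)⁻¹) * (γ σ₁)⁻¹ ∈ π.ker := by
        rw [MonoidHom.mem_ker]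
        simp [map_mul, map_inv, hγ, MonoidHom.mem_ker.mp (hker q)]
        exact mul_inv_cancel _
      have hcc : γ σ₁ * γ σ₂ * (γ (σ₁ * σ₂))⁻¹ ∈ π.ker := by
        rw [MonoidHom.mem_ker]; simp only [map_mul, map_inv, hγ]; group
      have hfact : (⟨p * q * (γ (π (p * q)))⁻¹, hker (p*q)⟩ : π.ker)
          = ⟨p * (γ σ₁)⁻¹, hker p⟩ * ⟨γ σ₁ * (q * (γ σ₂)⁻¹) * (γ σ₁)⁻¹, hb'⟩
            * ⟨γ σ₁ * γ σ₂ * (γ (σ₁ * σ₂))⁻¹, hcc⟩ := by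
        apply Subtype.ext
        show p * q * (γ (π (p * q)))⁻¹ = _
        rw [map_mul]
        simp only [MulMemClass.coe_mul]
        group
        rfl
      have hinv' : ρt ⟨γ σ₁ * (q * (γ σ₂)⁻¹) * (γ σ₁)⁻¹, hb'⟩
          = (h σ₁)⁻¹ * ψ σ₁ (ρt ⟨q * (γ σ₂)⁻¹, hker q⟩) * h σ₁ := by
        have := hinv σ₁ ⟨γ σ₁ * (q * (γ σ₂)⁻¹) * (γ σ₁)⁻¹, hb'⟩
        have heq : (⟨(γ σ₁)⁻¹ * (γ σ₁ * (q * (γ σ₂)⁻¹) * (γ σ₁)⁻¹) * γ σ₁, by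
            have hk : π ((γ σ₁ * (q * (γ σ₂)⁻¹) * (γ σ₁)⁻¹ : P)) = 1 :=
              MonoidHom.mem_ker.mp hb'
            rw [MonoidHom.mem_ker]
            simp [map_mul, map_inv, hγ, hk]⟩ : π.ker)
            = ⟨q * (γ σ₂)⁻¹, hker q⟩ := by
          apply Subtype.ext; show _ = q * (γ σ₂)⁻¹; group
        rw [heq] at this
        rw [this]
        group
      ext
      · show ρt ⟨p * q * (γ (π (p * q)))⁻¹, hker (p*q)⟩ * (h (π (p * q)))⁻¹
          = (ρt ⟨p * (γ σ₁)⁻¹, hker p⟩ * (h σ₁)⁻¹)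
            * ψ σ₁ (ρt ⟨q * (γ σ₂)⁻¹, hker q⟩ * (h σ₂)⁻¹)
        rw [hfact, map_mul, map_mul, hinv', hc σ₁ σ₂]
        have : π (p * q) = σ₁ * σ₂ := map_mul π p q
        rw [this]
        simp only [map_mul, map_inv]
        group
      · show π (p * q) = π p * π q
        exact map_mul π p q
    · intro η hη σ
      have hπσ : π (η * γ σ) = σ := by
        simp [map_mul, hγ, MonoidHom.mem_ker.mp hη]
      show (⟨ρt ⟨η * γ σ * (γ (π (η * γ σ)))⁻¹, hker _⟩ * (h (π (η * γ σ)))⁻¹,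
            π (η * γ σ)⟩ : G ⋊[ψ] Γ) = _
      have hval : (⟨η * γ σ * (γ (π (η * γ σ)))⁻¹, hker _⟩ : π.ker) = ⟨η, hη⟩ := by
        apply Subtype.ext; show η * γ σ * (γ (π (η * γ σ)))⁻¹ = η
        rw [hπσ]; group
      rw [hval]
      simp only [hπσ]
      ext <;> simp [mul_left, mul_right]
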